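/- Let a, b ∈ ℂ with a ≠ b, let S = [a,b] be the closed segment joining a and b, and let E ⊆ S be a closed set with a, b ∈ E. Let {I_n} be the connected components of S ∖ E, and for each n let C_n ⊆ ℂ be a continuum containing both endpoints of I_n. Then the set E ∪ ⋃_n C_n is connected. -/

import Mathlib

open Set Metric

/-- The connected components of a set `A`. -/
def setComponents (A : Set ℂ) : Set (Set ℂ) :=
  {I | ∃ x ∈ A, I = connectedComponentIn A x}

namespace FatouAux

noncomputable def lf (a b : ℂ) (t : ℝ) : ℂ := a + t • (b - a)
noncomputable def lg (a b : ℂ) (x : ℂ) : ℝ := ((x - a) / (b - a)).re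

lemma lf_cont (a b : ℂ) : Continuous (lf a b) := by unfold lf; fun_prop

lemma lg_cont (a b : ℂ) : Continuous (lg a b) := by
  unfold lg; fun_prop

lemma lg_lf {a b : ℂ} (hab : a ≠ b) (t : ℝ) : lg a b (lf a b t) = t := by
  have h : b - a ≠ 0 := sub_ne_zero.mpr (Ne.symm hab)
  simp only [lf, lg, add_sub_cancel_left, Complex.real_smul]
  rw [mul_div_assoc, div_self h, mul_one, Complex.ofReal_re]

lemma comp_eq_Ioo {W : Set ℝ} (hW : IsOpen W) (hWb : W ⊆ Ioo 0 1) {s : ℝ} (hs : s ∈ W) :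
    connectedComponentIn W s =
      Ioo (sInf (connectedComponentIn W s)) (sSup (connectedComponentIn W s)) := by
  set J := connectedComponentIn W s with hJ
  have hJne : s ∈ J := mem_connectedComponentIn hs
  have hJo : IsOpen J := hW.connectedComponentIn
  have hJsub : J ⊆ Ioo 0 1 := (connectedComponentIn_subset W s).trans hWb
  have hbdd : BddBelow J := ⟨0, fun x hx => (hJsub hx).1.le⟩
  have hbdd' : BddAbove J := ⟨1, fun x hx => (hJsub hx).2.le⟩
  have hpre : J.OrdConnected := isPreconnected_connectedComponentIn.ordConnected
  apply Subset.antisymm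
  · intro x hx
    obtain ⟨ε, hε, hball⟩ := Metric.isOpen_iff.1 hJo x hx
    constructor
    · rcases lt_or_eq_of_le (csInf_le hbdd hx) with h | h
      · exact h
      · exfalso
        have hmem : x - ε/2 ∈ J := hball (by
          simp only [mem_ball, Real.dist_eq]
          rw [abs_of_nonpos (by linarith)]; linarith)
        have := csInf_le hbdd hmem
        rw [← h] at this; linarith
    · rcases lt_or_eq_of_le (le_csSup hbdd' hx) with h | h
      · exact h
      · exfalso
        have hmem : x + ε/2 ∈ J := hball (by
          simp only [mem_ball, Real.dist_eq]
          rw [abs_of_nonneg (by linarith)]; linarith)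
        have := le_csSup hbdd' hmem
        rw [h] at this; linarith
  · intro x hx
    obtain ⟨u, hu, hux⟩ := exists_lt_of_csInf_lt ⟨s, hJne⟩ hx.1
    obtain ⟨v, hv, hxv⟩ := exists_lt_of_lt_csSup ⟨s, hJne⟩ hx.2
    exact hpre.out hu hv ⟨hux.le, hxv.le⟩

end FatouAux

theorem fatou_john_stmt5 (a b : ℂ) (hab : a ≠ b)
    (E : Set ℂ) (hEc : IsClosed E) (hES : E ⊆ segment ℝ a b)
    (haE : a ∈ E) (hbE : b ∈ E)
    (C : Set ℂ → Set ℂ)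
    (hC : ∀ I ∈ setComponents (segment ℝ a b \ E),
      IsCompact (C I) ∧ IsConnected (C I) ∧ (C I).Nontrivial ∧
        closure I \ I ⊆ C I) :
    IsConnected (E ∪ ⋃ I ∈ setComponents (segment ℝ a b \ E), C I) := by
  classical
  set S := segment ℝ a b with hSdef
  set f := FatouAux.lf a b with hfdef
  set g := FatouAux.lg a b with hgdef
  have hgf : ∀ t, g (f t) = t := FatouAux.lg_lf hab
  have finj : Function.Injective f := fun s t h => by rw [← hgf s, ← hgf t, h]
  have fcont : Continuous f := FatouAux.lf_cont a b
  have gcont : Continuous g := FatouAux.lg_cont a b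
  have fseg : f '' Icc 0 1 = S := (segment_eq_image' ℝ a b).symm
  set K : Set ℝ := {t ∈ Icc (0:ℝ) 1 | f t ∈ E} with hKdef
  set W : Set ℝ := {t ∈ Ioo (0:ℝ) 1 | f t ∉ E} with hWdef
  have hf0 : f 0 = a := by simp [hfdef, FatouAux.lf]
  have hf1 : f 1 = b := by simp [hfdef, FatouAux.lf]
  have hKW : ∀ t ∈ Icc (0:ℝ) 1, t ∈ K ∨ t ∈ W := by
    intro t ht
    by_cases hE : f t ∈ E
    · exact Or.inl ⟨ht, hE⟩
    · refine Or.inr ⟨⟨?_, ?_⟩, hE⟩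
      · rcases lt_or_eq_of_le ht.1 with h | h
        · exact h
        · exact absurd (h ▸ hf0 ▸ haE : f t ∈ E) hE
      · rcases lt_or_eq_of_le ht.2 with h | h
        · exact h
        · exact absurd (by rw [h, hf1]; exact hbE : f t ∈ E) hE
  have hKWdisj : ∀ t, t ∈ K → t ∈ W → False := fun t h1 h2 => h2.2 h1.2
  have hWopen : IsOpen W := by
    have : W = Ioo (0:ℝ) 1 ∩ f ⁻¹' Eᶜ := by
      ext t; simp [hWdef, mem_setOf_eq, and_comm]
    rw [this]
    exact isOpen_Ioo.inter (hEc.isOpen_compl.preimage fcont)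
  have hWIoo : W ⊆ Ioo 0 1 := fun t ht => ht.1
  have hWIcc : W ⊆ Icc 0 1 := fun t ht => Ioo_subset_Icc_self ht.1
  have hfW : f '' W = S \ E := by
    apply Subset.antisymm
    · rintro x ⟨t, ht, rfl⟩
      exact ⟨fseg ▸ mem_image_of_mem f (hWIcc ht), ht.2⟩
    · rintro x ⟨hxS, hxE⟩
      obtain ⟨t, ht, rfl⟩ := fseg ▸ hxS
      rcases hKW t ht with h | h
      · exact absurd h.2 hxE
      · exact mem_image_of_mem f h
  -- component correspondence
  have hcomp : ∀ s ∈ W, f '' connectedComponentIn W s = connectedComponentIn (S \ E) (f s) := by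
    intro s hs
    have hfsSE : f s ∈ S \ E := hfW ▸ mem_image_of_mem f hs
    apply Subset.antisymm
    · apply IsPreconnected.subset_connectedComponentIn
      · exact isPreconnected_connectedComponentIn.image f fcont.continuousOn
      · exact mem_image_of_mem f (mem_connectedComponentIn hs)
      · rw [← hfW]; exact image_mono (f := f) (connectedComponentIn_subset W s)
    · intro x hx
      have hxW : x ∈ f '' W := by rw [hfW]; exact connectedComponentIn_subset _ _ hx
      obtain ⟨u, hu, rfl⟩ := hxW
      have hsub : g '' connectedComponentIn (S \ E) (f s) ⊆ connectedComponentIn W s := by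
        apply IsPreconnected.subset_connectedComponentIn
        · exact isPreconnected_connectedComponentIn.image g gcont.continuousOn
        · exact ⟨f s, mem_connectedComponentIn hfsSE, hgf s⟩
        · rintro y ⟨z, hz, rfl⟩
          have : z ∈ f '' W := by
            rw [hfW]; exact connectedComponentIn_subset _ _ hz
          obtain ⟨w, hw, rfl⟩ := this
          rw [hgf w]; exact hw
      have := hsub ⟨f u, hx, hgf u⟩
      exact mem_image_of_mem f this
    -- endpoint facts
  have hclosure : ∀ s ∈ W, ∀ e,
      (e = sInf (connectedComponentIn W s) ∨ e = sSup (connectedComponentIn W s)) →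
      f e ∈ closure (connectedComponentIn (S \ E) (f s)) \ connectedComponentIn (S \ E) (f s) := by
    intro s hs e he
    set J := connectedComponentIn W s with hJd
    set p := sInf J with hpd
    set q := sSup J with hqd
    have hJIoo : J = Ioo p q := FatouAux.comp_eq_Ioo hWopen hWIoo hs
    have hsJ : s ∈ J := mem_connectedComponentIn hs
    have hpq : p < q := by rw [hJIoo] at hsJ; exact hsJ.1.trans hsJ.2
    have hIm : connectedComponentIn (S \ E) (f s) = f '' Ioo p q := by
      rw [← hcomp s hs, ← hJd, hJIoo]
    have hclI : closure (f '' Ioo p q) = f '' Icc p q := by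
      apply Subset.antisymm
      · exact closure_minimal (image_mono (f := f) Ioo_subset_Icc_self)
          (isCompact_Icc.image fcont).isClosed
      · rw [← closure_Ioo hpq.ne]
        exact image_closure_subset_closure_image fcont
    rw [hIm, hclI]
    constructor
    · rcases he with rfl | rfl
      · exact mem_image_of_mem f (left_mem_Icc.2 hpq.le)
      · exact mem_image_of_mem f (right_mem_Icc.2 hpq.le)
    · rintro ⟨u, hu, hfu⟩
      have hue := finj hfu
      subst hue
      rcases he with rfl | rfl
      · exact lt_irrefl _ hu.1
      · exact lt_irrefl _ hu.2
  have hend_between : ∀ t ∈ K, ∀ s ∈ W, ∃ e,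
      (e = sInf (connectedComponentIn W s) ∨ e = sSup (connectedComponentIn W s)) ∧
      |e - t| ≤ |s - t| := by
    intro t ht s hs
    set J := connectedComponentIn W s with hJd
    set p := sInf J with hpd
    set q := sSup J with hqd
    have hJIoo : J = Ioo p q := FatouAux.comp_eq_Ioo hWopen hWIoo hs
    have hsJ : s ∈ Ioo p q := by rw [← hJIoo]; exact mem_connectedComponentIn hs
    have htJ : t ∉ Ioo p q := by
      intro h
      rw [← hJIoo] at h
      exact hKWdisj t ht (connectedComponentIn_subset W s h)
    by_cases htp : t ≤ p
    · refine ⟨p, Or.inl rfl, ?_⟩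
      rw [abs_of_nonneg (by linarith), abs_of_nonneg (by linarith [hsJ.1])]
      linarith [hsJ.1]
    · refine ⟨q, Or.inr rfl, ?_⟩
      have hqt : q ≤ t := by
        by_contra h
        push_neg at h
        exact htJ ⟨lt_of_not_ge htp, h⟩
      rw [abs_of_nonpos (by linarith), abs_of_nonpos (by linarith [hsJ.2])]
      linarith [hsJ.2]
  have hmemcomps : ∀ s ∈ W, connectedComponentIn (S \ E) (f s) ∈ setComponents (S \ E) :=
    fun s hs => ⟨f s, hfW ▸ mem_image_of_mem f hs, rfl⟩
  -- the separation argument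
  set F := E ∪ ⋃ I ∈ setComponents (S \ E), C I with hFdef
  refine ⟨⟨a, mem_union_left _ haE⟩, ?_⟩
  rintro U V hU hV hUV ⟨x, hxF, hxU⟩ ⟨y, hyF, hyV⟩
  by_contra hcon
  have hem : ∀ z, z ∈ F → z ∈ U → z ∈ V → False := fun z h1 h2 h3 => hcon ⟨z, h1, h2, h3⟩
  have hCF : ∀ I ∈ setComponents (S \ E), C I ⊆ F := fun I hI =>
    (subset_biUnion_of_mem hI).trans subset_union_right
  have hdichot : ∀ I ∈ setComponents (S \ E), C I ⊆ U ∨ C I ⊆ V := by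
    intro I hI
    by_contra h
    push_neg at h
    obtain ⟨h1, h2⟩ := h
    obtain ⟨u1, hu1I, hu1U⟩ := not_subset.1 h1
    obtain ⟨u2, hu2I, hu2V⟩ := not_subset.1 h2
    have hpc := (hC I hI).2.1.isPreconnected
    have hsub : C I ⊆ U ∪ V := (hCF I hI).trans hUV
    have h1' : (C I ∩ U).Nonempty := ⟨u2, hu2I, (hsub hu2I).resolve_right hu2V⟩
    have h2' : (C I ∩ V).Nonempty := ⟨u1, hu1I, (hsub hu1I).resolve_left hu1U⟩
    obtain ⟨z, hz1, hz2, hz3⟩ := hpc U V hU hV hsub h1' h2'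
    exact hem z (hCF I hI hz1) hz2 hz3
  set P : Set ℂ → Set ℝ := fun U' => {t ∈ Icc (0:ℝ) 1 |
    (t ∈ K ∧ f t ∈ U') ∨ (t ∈ W ∧ C (connectedComponentIn (S \ E) (f t)) ⊆ U')} with hPdef
  have rel : ∀ U' V' : Set ℂ, IsOpen U' → F ⊆ U' ∪ V' →
      (∀ z ∈ F, z ∈ U' → z ∈ V' → False) →
      (∀ I ∈ setComponents (S \ E), C I ⊆ U' ∨ C I ⊆ V') →
      ∀ t ∈ P U', ∃ ε > 0, ∀ s ∈ Icc (0:ℝ) 1, |s - t| < ε → s ∈ P U' := by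
    intro U' V' hU' hcov hem' hsplit t htP
    obtain ⟨htIcc, hcase⟩ := htP
    rcases hcase with ⟨htK, htU⟩ | ⟨htW, htC⟩
    · obtain ⟨ε, hε, hball⟩ := Metric.isOpen_iff.1 (hU'.preimage fcont) t htU
      refine ⟨ε, hε, fun s hsIcc hdist => ?_⟩
      rcases hKW s hsIcc with hsK | hsW
      · exact ⟨hsIcc, Or.inl ⟨hsK, hball (by rwa [mem_ball, Real.dist_eq])⟩⟩
      · obtain ⟨e, hee, helt⟩ := hend_between t htK s hsW
        have hfe_mem := hclosure s hsW e hee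
        have hIcomps := hmemcomps s hsW
        have hfeC : f e ∈ C (connectedComponentIn (S \ E) (f s)) :=
          (hC _ hIcomps).2.2.2 hfe_mem
        have hfeU : f e ∈ U' := hball (by
          rw [mem_ball, Real.dist_eq]; exact lt_of_le_of_lt helt hdist)
        have hCU' : C (connectedComponentIn (S \ E) (f s)) ⊆ U' := by
          rcases hsplit _ hIcomps with h | h
          · exact h
          · exact (hem' (f e) (hCF _ hIcomps hfeC) hfeU (h hfeC)).elim
        exact ⟨hsIcc, Or.inr ⟨hsW, hCU'⟩⟩
    · have hJo : IsOpen (connectedComponentIn W t) := hWopen.connectedComponentIn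
      obtain ⟨ε, hε, hball⟩ := Metric.isOpen_iff.1 hJo t (mem_connectedComponentIn htW)
      refine ⟨ε, hε, fun s hsIcc hdist => ?_⟩
      have hsJ : s ∈ connectedComponentIn W t := hball (by rwa [mem_ball, Real.dist_eq])
      have hsW : s ∈ W := connectedComponentIn_subset W t hsJ
      have heq : connectedComponentIn (S \ E) (f s) = connectedComponentIn (S \ E) (f t) := by
        apply connectedComponentIn_eq
        rw [← hcomp s hsW]
        refine ⟨t, ?_, rfl⟩
        have h2 : connectedComponentIn W s = connectedComponentIn W t :=
          (connectedComponentIn_eq hsJ).symm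
        rw [h2]
        exact mem_connectedComponentIn htW
      exact ⟨hsIcc, Or.inr ⟨hsW, heq ▸ htC⟩⟩
  set Q : Set ℂ → Set ℝ := fun U' =>
    {u : ℝ | ∃ ε > 0, ∀ s ∈ Icc (0:ℝ) 1, |s - u| < ε → s ∈ P U'} with hQdef
  have hQopen : ∀ U', IsOpen (Q U') := by
    intro U'
    rw [Metric.isOpen_iff]
    rintro u ⟨ε, hε, hu⟩
    refine ⟨ε/2, by linarith, fun v hv => ⟨ε/2, by linarith, fun s hs hsv => hu s hs ?_⟩⟩
    rw [mem_ball, Real.dist_eq] at hv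
    have htri : |s - u| ≤ |s - v| + |v - u| := abs_sub_le s v u
    linarith
  have hQP : ∀ U', Icc (0:ℝ) 1 ∩ Q U' ⊆ P U' := by
    rintro U' u ⟨huIcc, ε, hε, hu⟩
    exact hu u huIcc (by simpa using hε)
  have hUVswap : F ⊆ V ∪ U := fun z hz => (hUV hz).elim Or.inr Or.inl
  have hemswap : ∀ z ∈ F, z ∈ V → z ∈ U → False := fun z h1 h2 h3 => hem z h1 h3 h2
  have hdichotswap : ∀ I ∈ setComponents (S \ E), C I ⊆ V ∨ C I ⊆ U :=
    fun I hI => (hdichot I hI).elim Or.inr Or.inl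
  have hPU_Q : P U ⊆ Q U := fun t ht => rel U V hU hUV hem hdichot t ht
  have hPV_Q : P V ⊆ Q V := fun t ht => rel V U hV hUVswap hemswap hdichotswap t ht
  have hcover : Icc (0:ℝ) 1 ⊆ Q U ∪ Q V := by
    intro t ht
    rcases hKW t ht with htK | htW
    · rcases hUV (mem_union_left _ htK.2) with h | h
      · exact Or.inl (hPU_Q ⟨ht, Or.inl ⟨htK, h⟩⟩)
      · exact Or.inr (hPV_Q ⟨ht, Or.inl ⟨htK, h⟩⟩)
    · rcases hdichot _ (hmemcomps t htW) with h | h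
      · exact Or.inl (hPU_Q ⟨ht, Or.inr ⟨htW, h⟩⟩)
      · exact Or.inr (hPV_Q ⟨ht, Or.inr ⟨htW, h⟩⟩)
  have hPmem : ∀ (U' V' : Set ℂ), (∀ z ∈ F, z ∈ U' → z ∈ V' → False) →
      (∀ I ∈ setComponents (S \ E), C I ⊆ U' ∨ C I ⊆ V') →
      ∀ x, x ∈ F → x ∈ U' → ∃ t ∈ Icc (0:ℝ) 1, t ∈ P U' := by
    intro U' V' hem' hsplit x hxF' hxU'
    rcases hxF' with hxE | hxC
    · have hxS : x ∈ S := hES hxE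
      rw [← fseg] at hxS
      obtain ⟨t, ht, rfl⟩ := hxS
      exact ⟨t, ht, ht, Or.inl ⟨⟨ht, hxE⟩, hxU'⟩⟩
    · simp only [mem_iUnion] at hxC
      obtain ⟨I, hI, hxI⟩ := hxC
      obtain ⟨z, hz, rfl⟩ := hI
      rw [← hfW] at hz
      obtain ⟨s, hsW, rfl⟩ := hz
      have hCU : C (connectedComponentIn (S \ E) (f s)) ⊆ U' := by
        rcases hsplit _ (hmemcomps s hsW) with h | h
        · exact h
        · exact (hem' x (hCF _ (hmemcomps s hsW) hxI) hxU' (h hxI)).elim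
      exact ⟨s, hWIcc hsW, hWIcc hsW, Or.inr ⟨hsW, hCU⟩⟩
  obtain ⟨tx, htxIcc, htxP⟩ := hPmem U V hem hdichot x hxF hxU
  obtain ⟨ty, htyIcc, htyP⟩ := hPmem V U hemswap hdichotswap y hyF hyV
  obtain ⟨u, huIcc, huQU, huQV⟩ :=
    isPreconnected_Icc (Q U) (Q V) (hQopen U) (hQopen V) hcover
      ⟨tx, htxIcc, hPU_Q htxP⟩ ⟨ty, htyIcc, hPV_Q htyP⟩
  have huPU := hQP U ⟨huIcc, huQU⟩
  have huPV := hQP V ⟨huIcc, huQV⟩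
  rcases huPU.2 with ⟨huK, hfuU⟩ | ⟨huW, hCU⟩ <;>
    rcases huPV.2 with ⟨huK', hfuV⟩ | ⟨huW', hCV⟩
  · exact hem (f u) (mem_union_left _ huK.2) hfuU hfuV
  · exact hKWdisj u huK huW'
  · exact hKWdisj u huK' huW
  · obtain ⟨z, hz⟩ := (hC _ (hmemcomps u huW)).2.2.1.nonempty
    exact hem z (hCF _ (hmemcomps u huW) hz) (hCU hz) (hCV hz)
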